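/- Let p be a prime and e(X) ∈ F_p[X] with (X−1)^{p−1} exactly dividing e(X) (i.e., (X−1)^{p−1} | e(X) but (X−1)^p ∤ e(X)). Then e(X) ≡ c·(1 + X + X² + ⋯ + X^{p−1}) (mod X^p − 1) for some nonzero c ∈ F_p; in particular, e(X) reduced modulo X^p − 1 has exactly p nonzero coefficients. -/

import Mathlib

theorem stmt_14 (p : ℕ) (hp : p.Prime) (e : Polynomial (ZMod p))
    (h1 : ((Polynomial.X : Polynomial (ZMod p)) - 1) ^ (p - 1) ∣ e)
    (h2 : ¬ ((Polynomial.X : Polynomial (ZMod p)) - 1) ^ p ∣ e) :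
    ∃ c : ZMod p, c ≠ 0 ∧
      e %ₘ (Polynomial.X ^ p - 1) = Polynomial.C c * ∑ i ∈ Finset.range p, Polynomial.X ^ i ∧
      (e %ₘ (Polynomial.X ^ p - 1)).support.card = p := by
  haveI := Fact.mk hp
  have hp0 : 0 < p := hp.pos
  obtain ⟨g, hg⟩ := h1
  set c := g.eval 1 with hc
  have hXsub : (Polynomial.X : Polynomial (ZMod p)) - 1 ≠ 0 := by
    simpa using Polynomial.X_sub_C_ne_zero (R := ZMod p) 1
  have hpow : ((Polynomial.X : Polynomial (ZMod p)) - 1) ^ p = Polynomial.X ^ p - 1 := by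
    rw [sub_pow_char]; simp
  have hgeom : ((Polynomial.X : Polynomial (ZMod p)) - 1) ^ (p - 1)
      = ∑ i ∈ Finset.range p, Polynomial.X ^ i := by
    apply mul_right_cancel₀ hXsub
    rw [geom_sum_mul, ← hpow, ← pow_succ, Nat.sub_add_cancel hp0]
  have hmonic : (Polynomial.X ^ p - 1 : Polynomial (ZMod p)).Monic := by
    simpa using Polynomial.monic_X_pow_sub_C (1 : ZMod p) hp0.ne'
  have hcne : c ≠ 0 := by
    intro h0
    apply h2
    have hroot : Polynomial.IsRoot g 1 := by simpa [Polynomial.IsRoot, ← hc] using h0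
    obtain ⟨g', hg'⟩ : (Polynomial.X : Polynomial (ZMod p)) - 1 ∣ g := by
      simpa using Polynomial.dvd_iff_isRoot.mpr hroot
    refine ⟨g', ?_⟩
    rw [hg, hg', ← mul_assoc, ← pow_succ, Nat.sub_add_cancel hp0]
  have hgdecomp : g = (Polynomial.X - 1) * (g /ₘ (Polynomial.X - 1)) + Polynomial.C c := by
    conv_lhs => rw [← Polynomial.modByMonic_add_div g (Polynomial.X - 1)]
    have : g %ₘ (Polynomial.X - 1) = Polynomial.C c := by
      simpa using Polynomial.modByMonic_X_sub_C_eq_C_eval g 1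
    rw [this, add_comm]
  set r : Polynomial (ZMod p) := Polynomial.C c * ∑ i ∈ Finset.range p, Polynomial.X ^ i with hr
  have hedecomp : e = (Polynomial.X ^ p - 1) * (g /ₘ (Polynomial.X - 1)) + r := by
    calc e = (Polynomial.X - 1) ^ (p - 1) *
        ((Polynomial.X - 1) * (g /ₘ (Polynomial.X - 1)) + Polynomial.C c) := by
          rw [hg, ← hgdecomp]
      _ = ((Polynomial.X - 1) ^ (p - 1) * (Polynomial.X - 1)) * (g /ₘ (Polynomial.X - 1))
          + Polynomial.C c * (Polynomial.X - 1) ^ (p - 1) := by ring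
      _ = (Polynomial.X ^ p - 1) * (g /ₘ (Polynomial.X - 1)) + r := by
          rw [← pow_succ, Nat.sub_add_cancel hp0, hpow, hgeom]
  have hcoeff : ∀ n, r.coeff n = if n < p then c else 0 := by
    intro n
    rw [hr, Polynomial.coeff_C_mul, Polynomial.finset_sum_coeff]
    simp only [Polynomial.coeff_X_pow]
    rw [Finset.sum_ite_eq]
    by_cases h : n < p <;> simp [Finset.mem_range, h]
  have hdegr : r.degree < (Polynomial.X ^ p - 1 : Polynomial (ZMod p)).degree := by
    have hd : (Polynomial.X ^ p - 1 : Polynomial (ZMod p)).degree = p := by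
      simpa using Polynomial.degree_X_pow_sub_C hp0 (1 : ZMod p)
    rw [hd, Polynomial.degree_lt_iff_coeff_zero]
    intro m hm
    have hm' : ¬ m < p := not_lt.mpr (by exact_mod_cast hm)
    simp [hcoeff m, hm']
  have hmod : e %ₘ (Polynomial.X ^ p - 1) = r := by
    have h0 : (e - r) %ₘ (Polynomial.X ^ p - 1) = 0 := by
      rw [Polynomial.modByMonic_eq_zero_iff_dvd hmonic, hedecomp]
      simp [dvd_mul_right]
    rw [Polynomial.sub_modByMonic, (Polynomial.modByMonic_eq_self_iff hmonic).mpr hdegr] at h0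
    exact sub_eq_zero.mp h0
  have hsupp : r.support = Finset.range p := by
    ext n
    simp [Polynomial.mem_support_iff, hcoeff n, Finset.mem_range]
    by_cases h : n < p <;> simp [h, hcne]
  exact ⟨c, hcne, hmod, by rw [hmod, hsupp, Finset.card_range]⟩
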